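/- Let X₀, M be Hilbert spaces, a : X₀ × X₀ → ℝ and a_h-type forms bounded bilinear, b : X₀ × M → ℝ bounded bilinear with constant C_b, and suppose b satisfies the discrete inf-sup condition on subspaces X_{0,h} ⊆ X₀, M_h ⊆ M with constant c_b > 0. Suppose (u, p) and (u_h, p_h) satisfy a_ρ(u, w_h) + b(w_h, p) = l(w_h) and a_{ρ_h}(u_h, w_h) + b(w_h, p_h) = l(w_h) for all w_h ∈ X_{0,h}, where a_ρ(u,v) = ∫ α(ρ)u·v + ν∇u:∇v, with 0 ≤ α(·) ≤ ᾱ and α Lipschitz with constant L_α. Then for all q_h ∈ M_h: c_b ‖q_h − p_h‖_M ≤ ‖(α(ρ) − α(ρ_h)) u‖_{L²} + (ᾱ + ν)‖u − u_h‖_{H¹} + C_b ‖p − q_h‖_M, and hence ‖p − p_h‖_M ≤ C(‖(α(ρ) − α(ρ_h))u‖_{L²} + ‖u − u_h‖_{H¹} + inf_{q_h ∈ M_h}‖p − q_h‖_M) with C depending only on c_b, C_b, ᾱ, ν. -/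

import Mathlib

open scoped RealInnerProductSpace

/-- Pressure error estimate via the discrete inf-sup condition. Abstractly: `X₀` plays the
role of `H¹₀(Ω)^d`, `L` of `L²(Ω)^d` (with embedding `ι`, `‖ι v‖ ≤ ‖v‖`), `W` of the space
of gradients (with gradient map `G`, `‖G v‖ ≤ ‖v‖`), `mρ`/`mρh` of multiplication by
`α(ρ)`/`α(ρ_h)` (with `‖mρh z‖ ≤ ᾱ ‖z‖`), and the forms are
`a_ρ(v,w) = ⟪mρ(ιv), ιw⟫ + ν⟪Gv, Gw⟫`, `b` bounded bilinear with constant `C_b`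
satisfying the discrete inf-sup condition with constant `c_b` on `X_{0,h} × M_h`.
If `(u, p)` and `(u_h, p_h)` satisfy the corresponding Galerkin identities against all
`w_h ∈ X_{0,h}`, then for every `q_h ∈ M_h`,
`c_b ‖q_h − p_h‖ ≤ ‖(mρ − mρh)(ιu)‖ + (ᾱ + ν)‖u − u_h‖ + C_b ‖p − q_h‖`,
and consequently
`‖p − p_h‖ ≤ C (‖(mρ − mρh)(ιu)‖ + ‖u − u_h‖ + ‖p − q_h‖)`
with `C` depending only on `c_b, C_b, ᾱ, ν`. -/
theorem stmt19 {X₀ M L W : Type*}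
    [NormedAddCommGroup X₀] [InnerProductSpace ℝ X₀] [CompleteSpace X₀]
    [NormedAddCommGroup M] [InnerProductSpace ℝ M] [CompleteSpace M]
    [NormedAddCommGroup L] [InnerProductSpace ℝ L] [CompleteSpace L]
    [NormedAddCommGroup W] [InnerProductSpace ℝ W] [CompleteSpace W]
    (X0h : Submodule ℝ X₀) (Mh : Submodule ℝ M)
    (ι : X₀ →L[ℝ] L) (G : X₀ →L[ℝ] W)
    (hι : ∀ v : X₀, ‖ι v‖ ≤ ‖v‖) (hG : ∀ v : X₀, ‖G v‖ ≤ ‖v‖)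
    (mρ mρh : L →L[ℝ] L) (αbar ν cb Cb : ℝ)
    (hαbar : 0 ≤ αbar) (hν : 0 ≤ ν) (hcb : 0 < cb) (hCb : 0 ≤ Cb)
    (hmρh : ∀ z : L, ‖mρh z‖ ≤ αbar * ‖z‖)
    (b : X₀ →L[ℝ] M →L[ℝ] ℝ)
    (hb : ∀ (v : X₀) (q : M), |b v q| ≤ Cb * ‖v‖ * ‖q‖)
    (hinfsup : ∀ qh ∈ Mh, ∀ c : ℝ, c < cb * ‖qh‖ →
      ∃ vh ∈ X0h, vh ≠ 0 ∧ c * ‖vh‖ ≤ b vh qh)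
    (l : X₀ →L[ℝ] ℝ) (u uh : X₀) (p ph : M) (hph : ph ∈ Mh)
    (hGalerkin : ∀ wh ∈ X0h,
      (⟪mρ (ι u), ι wh⟫ + ν * ⟪G u, G wh⟫) + b wh p = l wh)
    (hGalerkinh : ∀ wh ∈ X0h,
      (⟪mρh (ι uh), ι wh⟫ + ν * ⟪G uh, G wh⟫) + b wh ph = l wh) :
    (∀ qh ∈ Mh, cb * ‖qh - ph‖ ≤
      ‖(mρ - mρh) (ι u)‖ + (αbar + ν) * ‖u - uh‖ + Cb * ‖p - qh‖) ∧
    ∃ C : ℝ, 0 < C ∧ C = max (max ((αbar + ν) / cb) (1 / cb)) (1 + Cb / cb) ∧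
      ∀ qh ∈ Mh, ‖p - ph‖ ≤
        C * (‖(mρ - mρh) (ι u)‖ + ‖u - uh‖ + ‖p - qh‖) := by
  have key : ∀ qh ∈ Mh, cb * ‖qh - ph‖ ≤
      ‖(mρ - mρh) (ι u)‖ + (αbar + ν) * ‖u - uh‖ + Cb * ‖p - qh‖ := by
    intro qh hqh
    set R := ‖(mρ - mρh) (ι u)‖ + (αbar + ν) * ‖u - uh‖ + Cb * ‖p - qh‖ with hR
    by_contra hcon
    push_neg at hcon
    obtain ⟨vh, hvh, hvne, hvb⟩ := hinfsup (qh - ph) (Mh.sub_mem hqh hph)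
      ((R + cb * ‖qh - ph‖) / 2) (by linarith)
    have hgal := hGalerkin vh hvh
    have hgalh := hGalerkinh vh hvh
    have hbsub : b vh (qh - ph) = b vh (qh - p) +
        (⟪mρh (ι uh) - mρ (ι u), ι vh⟫ + ν * ⟪G uh - G u, G vh⟫) := by
      simp only [map_sub, inner_sub_left, ContinuousLinearMap.sub_apply]
      ring_nf
      linarith
    have hE1 : ⟪mρh (ι uh) - mρ (ι u), ι vh⟫ ≤
        (‖(mρ - mρh) (ι u)‖ + αbar * ‖u - uh‖) * ‖vh‖ := by
      have heq : mρh (ι uh) - mρ (ι u) = -((mρ - mρh) (ι u)) - mρh (ι (u - uh)) := by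
        simp only [map_sub, ContinuousLinearMap.sub_apply]
        abel
      have h1 : ⟪mρh (ι uh) - mρ (ι u), ι vh⟫ ≤
          ‖mρh (ι uh) - mρ (ι u)‖ * ‖ι vh‖ := real_inner_le_norm _ _
      have h2 : ‖mρh (ι uh) - mρ (ι u)‖ ≤ ‖(mρ - mρh) (ι u)‖ + αbar * ‖u - uh‖ := by
        rw [heq]
        calc ‖-((mρ - mρh) (ι u)) - mρh (ι (u - uh))‖
            ≤ ‖-((mρ - mρh) (ι u))‖ + ‖mρh (ι (u - uh))‖ := norm_sub_le _ _
          _ ≤ ‖(mρ - mρh) (ι u)‖ + αbar * ‖u - uh‖ := by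
              rw [norm_neg]
              have := hmρh (ι (u - uh))
              have h3 := hι (u - uh)
              nlinarith [norm_nonneg (ι (u - uh))]
      have h4 := hι vh
      nlinarith [norm_nonneg (ι vh), norm_nonneg vh,
        norm_nonneg (mρh (ι uh) - mρ (ι u)), norm_nonneg ((mρ - mρh) (ι u)),
        mul_nonneg hαbar (norm_nonneg (u - uh))]
    have hE2 : ν * ⟪G uh - G u, G vh⟫ ≤ ν * (‖u - uh‖ * ‖vh‖) := by
      have h1 : ⟪G uh - G u, G vh⟫ ≤ ‖G uh - G u‖ * ‖G vh‖ := real_inner_le_norm _ _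
      have h2 : ‖G uh - G u‖ ≤ ‖u - uh‖ := by
        rw [← map_sub, ← norm_neg, ← map_neg, neg_sub]
        exact hG (u - uh)
      have h3 := hG vh
      have h4 : ⟪G uh - G u, G vh⟫ ≤ ‖u - uh‖ * ‖vh‖ := by
        nlinarith [norm_nonneg (G vh), norm_nonneg (G uh - G u), norm_nonneg vh,
          norm_nonneg (u - uh)]
      exact mul_le_mul_of_nonneg_left h4 hν
    have hE3 : b vh (qh - p) ≤ Cb * ‖p - qh‖ * ‖vh‖ := by
      have := hb vh (qh - p)
      have h5 : ‖qh - p‖ = ‖p - qh‖ := norm_sub_rev _ _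
      rw [h5] at this
      calc b vh (qh - p) ≤ |b vh (qh - p)| := le_abs_self _
        _ ≤ Cb * ‖vh‖ * ‖p - qh‖ := this
        _ = Cb * ‖p - qh‖ * ‖vh‖ := by ring
    have hbound : b vh (qh - ph) ≤ R * ‖vh‖ := by
      rw [hbsub, hR]
      nlinarith [norm_nonneg vh]
    have hvpos : 0 < ‖vh‖ := norm_pos_iff.mpr hvne
    nlinarith
  refine ⟨key, max (max ((αbar + ν) / cb) (1 / cb)) (1 + Cb / cb), ?_, rfl, ?_⟩
  · have : (1 : ℝ) ≤ 1 + Cb / cb := by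
      have := div_nonneg hCb hcb.le; linarith
    calc (0 : ℝ) < 1 := one_pos
      _ ≤ 1 + Cb / cb := this
      _ ≤ _ := le_max_right _ _
  · intro qh hqh
    set C := max (max ((αbar + ν) / cb) (1 / cb)) (1 + Cb / cb) with hCdef
    have hk := key qh hqh
    set E := ‖(mρ - mρh) (ι u)‖ with hE
    set D := ‖u - uh‖ with hD
    set P := ‖p - qh‖ with hP
    have hEnn : 0 ≤ E := norm_nonneg _
    have hDnn : 0 ≤ D := norm_nonneg _
    have hPnn : 0 ≤ P := norm_nonneg _
    have hA : αbar + ν ≤ C * cb := by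
      have h1 : (αbar + ν) / cb ≤ C := le_trans (le_max_left _ _) (le_max_left _ _)
      calc αbar + ν = ((αbar + ν) / cb) * cb := by field_simp
        _ ≤ C * cb := mul_le_mul_of_nonneg_right h1 hcb.le
    have h1 : (1 : ℝ) ≤ C * cb := by
      have h1 : 1 / cb ≤ C := le_trans (le_max_right _ _) (le_max_left _ _)
      calc (1 : ℝ) = (1 / cb) * cb := by field_simp
        _ ≤ C * cb := mul_le_mul_of_nonneg_right h1 hcb.le
    have hB : cb + Cb ≤ C * cb := by
      have h2 : 1 + Cb / cb ≤ C := le_max_right _ _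
      calc cb + Cb = (1 + Cb / cb) * cb := by field_simp
        _ ≤ C * cb := mul_le_mul_of_nonneg_right h2 hcb.le
    have htri : ‖p - ph‖ ≤ P + ‖qh - ph‖ := by
      calc ‖p - ph‖ = ‖(p - qh) + (qh - ph)‖ := by abel_nf
        _ ≤ P + ‖qh - ph‖ := norm_add_le _ _
    have hS : 0 ≤ ‖qh - ph‖ := norm_nonneg _
    have hE' := mul_le_mul_of_nonneg_right h1 hEnn
    have hA' := mul_le_mul_of_nonneg_right hA hDnn
    have hB' := mul_le_mul_of_nonneg_right hB hPnn
    have htri' := mul_le_mul_of_nonneg_left htri hcb.le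
    have h6 : cb * ‖p - ph‖ ≤ cb * (C * (E + D + P)) := by linarith
    exact (mul_le_mul_iff_right₀ hcb).mp h6
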